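/- Every totally C-reflexive module X over a commutative noetherian local ring R satisfies Ext_R^1(X, M) = 0 for every finitely generated R-module M of finite C-projective dimension; i.e., G_C(R) ⊆ X_C(R). -/

import Mathlib

open CategoryTheory IsLocalRing RingTheory.Sequence TensorProduct

noncomputable section

/-- The `i`-th Ext module `Ext_R^i(M,N)`. -/
def extM (R : Type) [CommRing R] (M N : Type) [AddCommGroup M] [Module R M]
    [AddCommGroup N] [Module R N] (i : ℕ) : ModuleCat R :=
  ((Ext R (ModuleCat R) i).obj (Opposite.op (ModuleCat.of R M))).obj (ModuleCat.of R N)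

/-- Vanishing of `Ext_R^i(M,N)`. -/
abbrev extVanish (R : Type) [CommRing R] (M N : Type) [AddCommGroup M] [Module R M]
    [AddCommGroup N] [Module R N] (i : ℕ) : Prop :=
  Subsingleton (extM R M N i)

/-- `C` is a semidualizing `R`-module: it is finitely generated, the natural map
`R → Hom_R(C,C)` is bijective and `Ext_R^i(C,C) = 0` for all `i > 0`. -/
def IsSemidualizing (R : Type) [CommRing R] (C : Type) [AddCommGroup C] [Module R C] : Prop :=
  Module.Finite R C ∧ Function.Bijective (LinearMap.lsmul R C) ∧
    ∀ i : ℕ, 0 < i → extVanish R C C i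

/-- `M` has finite `C`-projective dimension: there is a finite exact sequence
`0 → C^{b_n} → ⋯ → C^{b_0} → M → 0`. -/
def HasFinCpd (R : Type) [CommRing R] (C : Type) [AddCommGroup C] [Module R C]
    (M : Type) [AddCommGroup M] [Module R M] : Prop :=
  ∃ (n : ℕ) (b : ℕ → ℕ) (d : ∀ i : ℕ, ((Fin (b (i + 1)) → C) →ₗ[R] (Fin (b i) → C)))
    (aug : (Fin (b 0) → C) →ₗ[R] M),
      Function.Surjective aug ∧ Function.Exact (d 0) aug ∧
      (∀ i, i < n → Function.Exact (d (i + 1)) (d i)) ∧ Function.Injective (d n)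

/-- `X` belongs to the left perpendicular category `X_C(R)` of the modules of finite
`C`-projective dimension: `Ext^1_R(X,M) = 0` for every finitely generated `M` of finite
`C`-projective dimension. -/
def InXC (R : Type) [CommRing R] (C : Type) [AddCommGroup C] [Module R C]
    (X : Type) [AddCommGroup X] [Module R X] : Prop :=
  ∀ (M : Type) [AddCommGroup M] [Module R M], Module.Finite R M →
    HasFinCpd R C M → extVanish R X M 1

/-- `depth R = t`, via the Ext characterization: `Ext^i(k,R) = 0` for `i < t` and
`Ext^t(k,R) ≠ 0`. -/
def RingDepthEq (R : Type) [CommRing R] [IsLocalRing R] (t : ℕ) : Prop :=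
  (∀ i : ℕ, i < t → extVanish R (ResidueField R) R i) ∧
    ¬ extVanish R (ResidueField R) R t

/-- A minimal free resolution `⋯ → R^{b₁} → R^{b₀} → M → 0` of `M`
(over a local ring, each differential has entries in the maximal ideal). -/
structure MinFreeRes (R : Type) [CommRing R] [IsLocalRing R]
    (M : Type) [AddCommGroup M] [Module R M] where
  b : ℕ → ℕ
  d : ∀ n : ℕ, ((Fin (b (n + 1)) → R) →ₗ[R] (Fin (b n) → R))
  aug : (Fin (b 0) → R) →ₗ[R] M
  aug_surj : Function.Surjective aug
  exact_aug : Function.Exact (d 0) aug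
  res_exact : ∀ n, Function.Exact (d (n + 1)) (d n)
  minimal : ∀ n, LinearMap.range (d n) ≤ (maximalIdeal R) • (⊤ : Submodule R (Fin (b n) → R))

/-- The Auslander transpose of the `n`-th syzygy `Ω^n M` (where `Ω^0 M = M`):
the cokernel of the `R`-dual of the differential `d n : F_{n+1} → F_n`,
i.e. `Tr (Ω^n M) = coker (Hom(F_n,R) → Hom(F_{n+1},R))`. -/
def AusTr {R : Type} [CommRing R] [IsLocalRing R] {M : Type} [AddCommGroup M] [Module R M]
    (res : MinFreeRes R M) (n : ℕ) : Type :=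
  Module.Dual R (Fin (res.b (n + 1)) → R) ⧸ LinearMap.range (res.d n).dualMap

instance {R : Type} [CommRing R] [IsLocalRing R] {M : Type} [AddCommGroup M] [Module R M]
    (res : MinFreeRes R M) (n : ℕ) : AddCommGroup (AusTr res n) := by
  unfold AusTr; infer_instance

instance {R : Type} [CommRing R] [IsLocalRing R] {M : Type} [AddCommGroup M] [Module R M]
    (res : MinFreeRes R M) (n : ℕ) : Module R (AusTr res n) := by
  unfold AusTr; infer_instance

/-- `X` is totally `C`-reflexive: the natural biduality map `X → Hom(Hom(X,C),C)` is
bijective and `Ext^i(X,C) = Ext^i(Hom(X,C),C) = 0` for all `i > 0`. -/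
def IsTotallyCReflexive (R : Type) [CommRing R] (C X : Type) [AddCommGroup C] [Module R C]
    [AddCommGroup X] [Module R X] : Prop :=
  Function.Bijective ((LinearMap.id : (X →ₗ[R] C) →ₗ[R] (X →ₗ[R] C)).flip) ∧
  (∀ i : ℕ, 0 < i → extVanish R X C i) ∧
  (∀ i : ℕ, 0 < i → extVanish R (X →ₗ[R] C) C i)

/-- `C` has finite injective dimension (tested by Ext-vanishing against finitely
generated modules, which is equivalent over a noetherian ring). -/
def HasFiniteInjDim (R : Type) [CommRing R] (C : Type) [AddCommGroup C] [Module R C] : Prop :=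
  ∃ n : ℕ, ∀ (M : Type) [AddCommGroup M] [Module R M], Module.Finite R M →
    ∀ i : ℕ, n < i → extVanish R M C i

/-- A local ring is regular if its maximal ideal is generated by a regular sequence. -/
def IsRegLocal (R : Type) [CommRing R] [IsLocalRing R] : Prop :=
  ∃ xs : List R, IsRegular R xs ∧ Ideal.span {x | x ∈ xs} = maximalIdeal R

/-- `pd_R M ≤ n`, via Ext-vanishing against finitely generated test modules. -/
def ProjDimLE (R : Type) [CommRing R] (M : Type) [AddCommGroup M] [Module R M] (n : ℕ) : Prop :=
  ∀ (N : Type) [AddCommGroup N] [Module R N], Module.Finite R N →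
    ∀ i : ℕ, n < i → Subsingleton (extM R M N i)

/-- `pd_R M = n`. -/
def ProjDimEq (R : Type) [CommRing R] (M : Type) [AddCommGroup M] [Module R M] (n : ℕ) : Prop :=
  ProjDimLE R M n ∧ ∀ m : ℕ, m < n → ¬ ProjDimLE R M m

section ExtProofAux
open Limits Opposite

namespace ExtAux
variable {R : Type} [CommRing R] {X : ModuleCat R} (P : ProjectiveResolution X)

/-- morphism of Hom complexes induced by `f : A ⟶ B`. -/
def mapK {A B : ModuleCat R} (f : A ⟶ B) :
    P.complex.linearYonedaObj R A ⟶ P.complex.linearYonedaObj R B where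
  f i := ((linearYoneda R (ModuleCat R)).map f).app (op (P.complex.X i))
  comm' i j _ := by
    ext (g : P.complex.X i ⟶ A)
    simp [ChainComplex.linearYonedaObj_d]
    rfl

end ExtAux
namespace ExtAux2
open ExtAux
variable {R : Type} [CommRing R] {X : ModuleCat R} (P : ProjectiveResolution X)
variable {A B M : ModuleCat R} (f : A ⟶ B) (g : B ⟶ M)

/-- Short complex of Hom cochain complexes. -/
def SK (hfg : f ≫ g = 0) : ShortComplex (CochainComplex (ModuleCat R) ℕ) :=
  ShortComplex.mk (mapK P f) (mapK P g) (by
    ext i (x : P.complex.X i ⟶ A)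
    simp [mapK, hfg]
    change (x ≫ f) ≫ g = 0
    rw [Category.assoc, hfg, Limits.comp_zero])

lemma SK_shortExact (hf : Function.Injective f) (hg : Function.Surjective g)
    (hfg : Function.Exact f g) (h0 : f ≫ g = 0) : (SK P f g h0).ShortExact := by
  apply HomologicalComplex.shortExact_of_degreewise_shortExact
  intro i
  refine ShortComplex.ShortExact.mk' ?_ ?_ ?_
  · rw [ShortComplex.moduleCat_exact_iff]
    dsimp [SK, mapK]
    intro (y : P.complex.X i ⟶ B) hy
    have hy' : ∀ b, g (y b) = 0 := fun b => by
      have hy0 : y ≫ g = 0 := hy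
      have := congrArg (fun h => ModuleCat.Hom.hom h b) hy0
      simpa using this
    have hrange : ∀ b, y b ∈ LinearMap.range f.hom := fun b => by
      rcases (hfg (y b)).mp (hy' b) with ⟨a, ha⟩
      exact ⟨a, ha⟩
    refine ⟨ModuleCat.ofHom ((LinearEquiv.ofInjective f.hom hf).symm.toLinearMap ∘ₗ
      LinearMap.codRestrict (LinearMap.range f.hom) y.hom hrange), ?_⟩
    refine ModuleCat.hom_ext (LinearMap.ext fun b => ?_)
    show f ((LinearEquiv.ofInjective f.hom hf).symm ⟨y b, hrange b⟩) = y b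
    have := (LinearEquiv.ofInjective f.hom hf).apply_symm_apply ⟨y b, hrange b⟩
    exact congrArg Subtype.val this
  · dsimp [SK, mapK]
    rw [ModuleCat.mono_iff_injective]
    intro x y hxy
    refine ModuleCat.hom_ext (LinearMap.ext fun b => ?_)
    have hxy' : x ≫ f = y ≫ f := hxy
    exact hf (congrArg (fun h => ModuleCat.Hom.hom h b) hxy')
  · dsimp [SK, mapK]
    rw [ModuleCat.epi_iff_surjective]
    intro (y : P.complex.X i ⟶ M)
    have : Epi g := (ModuleCat.epi_iff_surjective g).mpr hg
    have := P.projective i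
    exact ⟨Projective.factorThru y g, Projective.factorThru_comp y g⟩

end ExtAux2
namespace ExtAux3
open ExtAux ExtAux2
variable {R : Type} [CommRing R] {X : ModuleCat R} (P : ProjectiveResolution X)

lemma subsingleton_ext_iff (Y : ModuleCat R) (i : ℕ) :
    Subsingleton (((Ext R (ModuleCat R) i).obj (op X)).obj Y) ↔
      Subsingleton ((P.complex.linearYonedaObj R Y).homology i) :=
  (P.isoExt i Y).toLinearEquiv.toEquiv.subsingleton_congr

lemma subsingleton_of_isZero {M : ModuleCat R} (h : IsZero M) : Subsingleton M := by
  refine ⟨fun a b => ?_⟩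
  have h1 : (𝟙 M : M ⟶ M) = 0 := h.eq_of_src _ _
  calc a = (𝟙 M : M ⟶ M) a := rfl
    _ = (0 : M ⟶ M) a := by rw [h1]
    _ = (𝟙 M : M ⟶ M) b := by rw [h1]; rfl
    _ = b := rfl

lemma homology_subsingleton {Y : ModuleCat R} (hY : Subsingleton Y) (i : ℕ) :
    Subsingleton ((P.complex.linearYonedaObj R Y).homology i) := by
  apply subsingleton_of_isZero
  rw [← HomologicalComplex.exactAt_iff_isZero_homology, HomologicalComplex.exactAt_iff]
  apply ShortComplex.exact_of_isZero_X₂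
  haveI := hY
  haveI : Subsingleton ((P.complex.linearYonedaObj R Y).X i) :=
    ⟨fun a b => ModuleCat.hom_ext (Subsingleton.elim (α := ↑(P.complex.X i) →ₗ[R] ↑Y) _ _)⟩
  exact ModuleCat.isZero_of_subsingleton ((P.complex.linearYonedaObj R Y).X i)

variable {A B M : ModuleCat R} (f : A ⟶ B) (g : B ⟶ M)
  (hf : Function.Injective f) (hg : Function.Surjective g) (hfg : Function.Exact f g)

include hf hg hfg in
set_option linter.unusedSectionVars false in
lemma homology_vanish₃ (i : ℕ)
    (hB : Subsingleton ((P.complex.linearYonedaObj R B).homology i))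
    (hA : Subsingleton ((P.complex.linearYonedaObj R A).homology (i + 1))) :
    Subsingleton ((P.complex.linearYonedaObj R M).homology i) := by
  have h0 : f ≫ g = 0 := by
    refine ModuleCat.hom_ext (LinearMap.ext fun a => ?_)
    simpa using hfg.apply_apply_eq_zero a
  have hS := SK_shortExact P f g hf hg hfg h0
  have hex := hS.homology_exact₃ i (i + 1) (by simp)
  apply subsingleton_of_isZero
  apply hex.isZero_X₂
  · haveI := hB
    exact (ModuleCat.isZero_of_subsingleton
      ((P.complex.linearYonedaObj R B).homology i)).eq_of_src _ _
  · haveI := hA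
    exact (ModuleCat.isZero_of_subsingleton
      ((P.complex.linearYonedaObj R A).homology (i + 1))).eq_of_tgt _ _

include hf hg hfg in
set_option linter.unusedSectionVars false in
lemma homology_vanish₂ (i : ℕ)
    (hA : Subsingleton ((P.complex.linearYonedaObj R A).homology i))
    (hM : Subsingleton ((P.complex.linearYonedaObj R M).homology i)) :
    Subsingleton ((P.complex.linearYonedaObj R B).homology i) := by
  have h0 : f ≫ g = 0 := by
    refine ModuleCat.hom_ext (LinearMap.ext fun a => ?_)
    simpa using hfg.apply_apply_eq_zero a
  have hS := SK_shortExact P f g hf hg hfg h0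
  have hex := hS.homology_exact₂ i
  apply subsingleton_of_isZero
  apply hex.isZero_X₂
  · haveI := hA
    exact (ModuleCat.isZero_of_subsingleton
      ((P.complex.linearYonedaObj R A).homology i)).eq_of_src _ _
  · haveI := hM
    exact (ModuleCat.isZero_of_subsingleton
      ((P.complex.linearYonedaObj R M).homology i)).eq_of_tgt _ _

end ExtAux3
namespace ExtAux4
open ExtAux ExtAux2 ExtAux3

variable {R : Type} [CommRing R] (X : Type) [AddCommGroup X] [Module R X]

def PP : ProjectiveResolution (ModuleCat.of R X) := ProjectiveResolution.of _

lemma vanish_iff (Y : Type) [AddCommGroup Y] [Module R Y] (i : ℕ) :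
    extVanish R X Y i ↔
      Subsingleton (((PP X).complex.linearYonedaObj R (ModuleCat.of R Y)).homology i) :=
  subsingleton_ext_iff (PP X) (ModuleCat.of R Y) i

lemma vanish_of_subsingleton (Y : Type) [AddCommGroup Y] [Module R Y]
    (hY : Subsingleton Y) (i : ℕ) : extVanish R X Y i :=
  (vanish_iff X Y i).mpr (homology_subsingleton (PP X) hY i)

variable {A B M : Type} [AddCommGroup A] [Module R A] [AddCommGroup B] [Module R B]
  [AddCommGroup M] [Module R M] (f : A →ₗ[R] B) (g : B →ₗ[R] M)
  (hf : Function.Injective f) (hg : Function.Surjective g) (hfg : Function.Exact f g)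

include hf hg hfg in
lemma step₃ (i : ℕ) (hB : extVanish R X B i) (hA : extVanish R X A (i + 1)) :
    extVanish R X M i := by
  rw [vanish_iff] at hB hA ⊢
  exact homology_vanish₃ (PP X) (ModuleCat.ofHom f) (ModuleCat.ofHom g) hf hg hfg i hB hA

include hf hg hfg in
lemma step₂ (i : ℕ) (hA : extVanish R X A i) (hM : extVanish R X M i) :
    extVanish R X B i := by
  rw [vanish_iff] at hA hM ⊢
  exact homology_vanish₂ (PP X) (ModuleCat.ofHom f) (ModuleCat.ofHom g) hf hg hfg i hA hM

lemma vanish_congr {Y Z : Type} [AddCommGroup Y] [Module R Y] [AddCommGroup Z] [Module R Z]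
    (e : Y ≃ₗ[R] Z) (i : ℕ) : extVanish R X Y i ↔ extVanish R X Z i :=
  (((Ext R (ModuleCat R) i).obj (Opposite.op (ModuleCat.of R X))).mapIso
    e.toModuleIso).toLinearEquiv.toEquiv.subsingleton_congr

end ExtAux4
namespace ExtAux5
open ExtAux4

variable {R : Type} [CommRing R] (X : Type) [AddCommGroup X] [Module R X]

lemma vanish_pi {C : Type} [AddCommGroup C] [Module R C]
    (hC : ∀ i, 0 < i → extVanish R X C i) (b : ℕ) :
    ∀ i, 0 < i → extVanish R X (Fin b → C) i := by
  induction b with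
  | zero =>
    intro i _
    exact vanish_of_subsingleton X _ inferInstance i
  | succ b ih =>
    intro i hi
    let f : C →ₗ[R] (Fin (b + 1) → C) := LinearMap.single R (fun _ => C) 0
    let g : (Fin (b + 1) → C) →ₗ[R] (Fin b → C) := LinearMap.funLeft R C Fin.succ
    have hf : Function.Injective f := Pi.single_injective (M := fun _ => C) 0
    have hg : Function.Surjective g :=
      LinearMap.funLeft_surjective_of_injective R C _ (Fin.succ_injective b)
    have hfg : Function.Exact f g := by
      intro y
      constructor
      · intro hy
        refine ⟨y 0, funext fun j => ?_⟩
        refine Fin.cases ?_ (fun k => ?_) j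
        · simp [f]
        · have h1 : y (Fin.succ k) = 0 := congrFun hy k
          simp [f, Pi.single_eq_of_ne (Fin.succ_ne_zero k), h1]
      · rintro ⟨x, rfl⟩
        funext k
        simp [f, g, LinearMap.funLeft, Pi.single_eq_of_ne (Fin.succ_ne_zero k)]
    exact step₂ X f g hf hg hfg i (hC i hi) (ih i hi)

end ExtAux5
namespace ExtAux6
open ExtAux4 ExtAux5

variable {R : Type} [CommRing R] {C : Type} [AddCommGroup C] [Module R C]
  {X : Type} [AddCommGroup X] [Module R X]

theorem main_vanish (hXC : ∀ i, 0 < i → extVanish R X C i)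
    (M : Type) [AddCommGroup M] [Module R M]
    (n : ℕ) (b : ℕ → ℕ) (d : ∀ i : ℕ, ((Fin (b (i + 1)) → C) →ₗ[R] (Fin (b i) → C)))
    (aug : (Fin (b 0) → C) →ₗ[R] M)
    (hsurj : Function.Surjective aug) (hex0 : Function.Exact (d 0) aug)
    (hmid : ∀ i, i < n → Function.Exact (d (i + 1)) (d i))
    (hinj : Function.Injective (d n)) :
    extVanish R X M 1 := by
  have hpi : ∀ bb i, 0 < i → extVanish R X (Fin bb → C) i := fun bb => vanish_pi X hXC bb
  have key : ∀ m j, j ≤ n → n - j = m → ∀ i, 0 < i →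
      extVanish R X ↥(LinearMap.range (d j)) i := by
    intro m
    induction m with
    | zero =>
      intro j hj hm i hi
      have hjn : j = n := by omega
      subst hjn
      exact (vanish_congr X (LinearEquiv.ofInjective (d j) hinj) i).mp (hpi _ i hi)
    | succ m ih =>
      intro j hj hm i hi
      have hjn : j < n := by omega
      have hf : Function.Injective (LinearMap.range (d (j + 1))).subtype :=
        Submodule.injective_subtype _
      have hg : Function.Surjective (d j).rangeRestrict :=
        LinearMap.surjective_rangeRestrict _
      have hfg : Function.Exact (LinearMap.range (d (j + 1))).subtype (d j).rangeRestrict := by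
        intro y
        constructor
        · intro hy
          have h1 : d j y = 0 := by
            have := congrArg (Subtype.val) hy
            simpa using this
          rcases ((hmid j hjn) y).mp h1 with ⟨x, hx⟩
          exact ⟨⟨y, ⟨x, hx⟩⟩, rfl⟩
        · rintro ⟨⟨y, hy⟩, rfl⟩
          rcases hy with ⟨x, hx⟩
          apply Subtype.ext
          simpa using ((hmid j hjn) y).mpr ⟨x, hx⟩
      exact step₃ X _ _ hf hg hfg i (hpi _ i hi) (ih (j + 1) (by omega) (by omega) (i + 1) (by omega))
  have hf : Function.Injective (LinearMap.range (d 0)).subtype := Submodule.injective_subtype _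
  have hfg : Function.Exact (LinearMap.range (d 0)).subtype aug := by
    intro y
    constructor
    · intro hy
      rcases (hex0 y).mp hy with ⟨x, hx⟩
      exact ⟨⟨y, ⟨x, hx⟩⟩, rfl⟩
    · rintro ⟨⟨y, ⟨x, hx⟩⟩, rfl⟩
      exact (hex0 y).mpr ⟨x, hx⟩
  exact step₃ X _ _ hf hsurj hfg 1 (hpi _ 1 one_pos)
    (key n 0 (Nat.zero_le n) (by omega) 2 (by omega))

end ExtAux6

end ExtProofAux

/-- Every totally `C`-reflexive module `X` over a commutative noetherian local ring `R`
satisfies `Ext_R^1(X,M) = 0` for every finitely generated `M` of finite `C`-projective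
dimension; i.e. `G_C(R) ⊆ X_C(R)`. -/
theorem totally_reflexive_mem_perp
    (R : Type) [CommRing R] [IsNoetherianRing R] [IsLocalRing R]
    (C : Type) [AddCommGroup C] [Module R C] (hC : IsSemidualizing R C)
    (X : Type) [AddCommGroup X] [Module R X] [Module.Finite R X]
    (hX : IsTotallyCReflexive R C X) :
    InXC R C X := by
  intro M _ _ _ hfin
  obtain ⟨n, b, d, aug, hsurj, hex0, hmid, hinj⟩ := hfin
  exact ExtAux6.main_vanish hX.2.1 M n b d aug hsurj hex0 hmid hinj
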